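/- Let G = (V,E) be a finite simple graph with |V| ≥ 2. Define the cognitive radio network I where the channel set is E, the SU set is V, SpecMap(v) is the set of edges of G incident to v, every SU has antenna budget 2, and the potential graph is the complete graph on V. Then G contains a Hamiltonian path if and only if I is connectable. -/

import Mathlib

/-- A cognitive radio network: secondary users `U`, channels `C`,
spectrum maps, a potential graph, and antenna budgets. -/
structure CRN (U C : Type) where
  SpecMap : U → Finset C
  PG : SimpleGraph U
  budget : U → ℕ

/-- A valid spectrum assignment: each SU opens a subset of its spectrum map
of size at most its antenna budget. -/
def CRN.ValidSA {U C : Type} [DecidableEq C] (I : CRN U C) (SA : U → Finset C) : Prop :=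
  ∀ u, SA u ⊆ I.SpecMap u ∧ (SA u).card ≤ I.budget u

/-- The realization graph under a spectrum assignment: potential edges whose
endpoints share an opened channel. -/
def CRN.RG {U C : Type} [DecidableEq C] (I : CRN U C) (SA : U → Finset C) : SimpleGraph U where
  Adj u v := I.PG.Adj u v ∧ (SA u ∩ SA v).Nonempty
  symm := ⟨fun u v h => ⟨I.PG.symm.symm _ _ h.1, by rw [Finset.inter_comm]; exact h.2⟩⟩
  loopless := ⟨fun u h => I.PG.loopless.irrefl u h.1⟩

/-- A network is connectable if some valid spectrum assignment makes the
realization graph connected. -/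
def CRN.Connectable {U C : Type} [DecidableEq C] (I : CRN U C) : Prop :=
  ∃ SA, I.ValidSA SA ∧ (I.RG SA).Connected

section Aux

open SimpleGraph

variable {V : Type} [DecidableEq V]

/-- any vertex of an edge of a walk is in the support -/
private lemma mem_support_of_mem_edges' {G : SimpleGraph V} {u w v : V} {p : G.Walk u w}
    {e : Sym2 V} (he : e ∈ p.edges) (hv : v ∈ e) : v ∈ p.support := by
  induction e with
  | h s t =>
    rw [Sym2.mem_iff] at hv
    rcases hv with rfl | rfl
    · exact p.fst_mem_support_of_mem_edges he
    · exact p.snd_mem_support_of_mem_edges he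

/-- interior vertices of a path have two distinct neighbors on the path -/
private lemma internal_nbrs {H : SimpleGraph V} {u w : V} (p : H.Walk u w) :
    p.IsPath → ∀ b, b ∈ p.support → b ≠ u → b ≠ w →
      ∃ c d, c ≠ d ∧ c ∈ p.support ∧ d ∈ p.support ∧ H.Adj b c ∧ H.Adj b d := by
  induction p with
  | nil =>
    intro _ b hb hbu _
    simp only [SimpleGraph.Walk.support_nil, List.mem_singleton] at hb
    exact absurd hb hbu
  | @cons u v w h p' ih =>
    intro hp b hb hbu hbw
    rw [SimpleGraph.Walk.support_cons, List.mem_cons] at hb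
    rcases hb with rfl | hb
    · exact absurd rfl hbu
    by_cases hbv : b = v
    · subst hbv
      cases p' with
      | nil => exact absurd rfl hbw
      | @cons _ x _ h' p'' =>
        refine ⟨u, x, ?_, by simp, ?_, h.symm, h'⟩
        · rintro rfl
          exact (SimpleGraph.Walk.cons_isPath_iff h _).mp hp |>.2 (by simp)
        · simp [SimpleGraph.Walk.support_cons]
    · obtain ⟨c, d, hcd, hc, hd, hbc, hbd⟩ := ih hp.of_cons b hb hbv hbw
      exact ⟨c, d, hcd, by simp [SimpleGraph.Walk.support_cons, hc],
        by simp [SimpleGraph.Walk.support_cons, hd], hbc, hbd⟩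

/-- a walk from outside a set into the set crosses the boundary -/
private lemma crossing {H : SimpleGraph V} (P : V → Prop) {x y : V} (W : H.Walk x y) :
    ¬ P x → P y → ∃ a b, H.Adj a b ∧ ¬ P a ∧ P b := by
  induction W with
  | nil => intro hx hy; exact absurd hy hx
  | @cons x v y h W' ih =>
    intro hx hy
    by_cases hv : P v
    · exact ⟨x, v, h, hx, hv⟩
    · exact ih hv hy

/-- paths in max-degree-2 graphs can be extended to absorb adjacent outside vertices -/
private lemma extend {H : SimpleGraph V}
    (hdeg : ∀ v a c d, a ≠ c → a ≠ d → c ≠ d → H.Adj v a → H.Adj v c → H.Adj v d → False)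
    {u w : V} (p : H.Walk u w) (hp : p.IsPath) {a b : V} (ha : a ∉ p.support)
    (hb : b ∈ p.support) (hab : H.Adj a b) :
    ∃ u' w', ∃ q : H.Walk u' w', q.IsPath ∧ a ∈ q.support ∧
      ∀ x ∈ p.support, x ∈ q.support := by
  by_cases hbu : b = u
  · subst hbu
    exact ⟨a, w, SimpleGraph.Walk.cons hab p,
      (SimpleGraph.Walk.cons_isPath_iff _ _).mpr ⟨hp, ha⟩, by simp,
      fun x hx => by simp [SimpleGraph.Walk.support_cons, hx]⟩
  by_cases hbw : b = w
  · subst hbw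
    refine ⟨a, u, SimpleGraph.Walk.cons hab p.reverse,
      (SimpleGraph.Walk.cons_isPath_iff _ _).mpr ⟨hp.reverse, by simpa using ha⟩,
      by simp, fun x hx => ?_⟩
    simp only [SimpleGraph.Walk.support_cons, List.mem_cons,
      SimpleGraph.Walk.support_reverse, List.mem_reverse]
    exact Or.inr hx
  · exfalso
    obtain ⟨c, d, hcd, hc, hd, hbc, hbd⟩ := internal_nbrs p hp b hb hbu hbw
    exact hdeg b a c d (fun h => ha (h ▸ hc)) (fun h => ha (h ▸ hd)) hcd hab.symm hbc hbd

/-- a connected graph with max degree two has a Hamiltonian path -/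
private lemma grow [Fintype V] {H : SimpleGraph V}
    (hdeg : ∀ v a c d, a ≠ c → a ≠ d → c ≠ d → H.Adj v a → H.Adj v c → H.Adj v d → False)
    (hconn : H.Connected) :
    ∀ (n : ℕ) {u w : V} (p : H.Walk u w), p.IsPath →
      (Finset.univ.filter (fun x => x ∉ p.support)).card ≤ n →
      ∃ u' w', ∃ q : H.Walk u' w', q.IsHamiltonian := by
  intro n
  induction n with
  | zero =>
    intro u w p hp hcard
    refine ⟨u, w, p, hp.isHamiltonian_of_mem fun x => ?_⟩
    by_contra hx
    have : x ∈ Finset.univ.filter (fun x => x ∉ p.support) := by simp [hx]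
    rw [Finset.card_eq_zero.mp (Nat.le_zero.mp hcard)] at this
    exact absurd this (Finset.notMem_empty x)
  | succ n ih =>
    intro u w p hp hcard
    by_cases hall : ∀ x, x ∈ p.support
    · exact ⟨u, w, p, hp.isHamiltonian_of_mem hall⟩
    · push_neg at hall
      obtain ⟨x, hx⟩ := hall
      obtain ⟨W⟩ := hconn.preconnected x u
      obtain ⟨a, b, hab, haS, hbS⟩ := crossing (fun v => v ∈ p.support) W hx p.start_mem_support
      obtain ⟨u', w', q, hq, haq, hsub⟩ := extend hdeg p hp haS hbS hab
      refine ih q hq ?_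
      have hss : Finset.univ.filter (fun y => y ∉ q.support) ⊆
          (Finset.univ.filter (fun y => y ∉ p.support)).erase a := by
        intro y hy
        simp only [Finset.mem_filter, Finset.mem_erase, Finset.mem_univ, true_and] at hy ⊢
        exact ⟨fun h => hy (h ▸ haq), fun h => hy (hsub y h)⟩
      have hlt : (Finset.univ.filter (fun y => y ∉ q.support)).card <
          (Finset.univ.filter (fun y => y ∉ p.support)).card :=
        lt_of_le_of_lt (Finset.card_le_card hss)
          (Finset.card_erase_lt_of_mem (by simp [haS]))
      omega

private lemma mem_incF [Fintype V] {G : SimpleGraph V} [DecidableRel G.Adj] {v : V}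
    {e : Sym2 V} : e ∈ G.incidenceFinset v ↔ e ∈ G.edgeSet ∧ v ∈ e := by
  rw [SimpleGraph.mem_incidenceFinset]
  exact Iff.rfl

/-- each vertex is incident to at most one edge of a path starting at it -/
private lemma inc_card_start [Fintype V] {G : SimpleGraph V} [DecidableRel G.Adj] {u w : V}
    (p : G.Walk u w) (hp : p.IsPath) :
    (p.edges.toFinset ∩ G.incidenceFinset u).card ≤ 1 := by
  cases p with
  | nil => simp
  | @cons _ x _ h p' =>
    have hsub : ((SimpleGraph.Walk.cons h p').edges.toFinset ∩ G.incidenceFinset u)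
        ⊆ {s(u, x)} := by
      intro e he
      simp only [Finset.mem_inter, List.mem_toFinset, SimpleGraph.Walk.edges_cons,
        List.mem_cons, mem_incF, Finset.mem_singleton] at he ⊢
      obtain ⟨he1 | he1, _, hue⟩ := he
      · exact he1
      · exact absurd (mem_support_of_mem_edges' he1 hue)
          ((SimpleGraph.Walk.cons_isPath_iff h p').mp hp).2
    calc _ ≤ ({s(u, x)} : Finset (Sym2 V)).card := Finset.card_le_card hsub
      _ = 1 := Finset.card_singleton _

/-- each vertex is incident to at most two edges of a path -/
private lemma inc_card_two [Fintype V] {G : SimpleGraph V} [DecidableRel G.Adj] {u w : V}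
    (p : G.Walk u w) (hp : p.IsPath) (v : V) :
    (p.edges.toFinset ∩ G.incidenceFinset v).card ≤ 2 := by
  induction p with
  | nil => simp
  | @cons u x w h p' ih =>
    by_cases hvu : v = u
    · subst hvu
      exact le_trans (inc_card_start _ hp) one_le_two
    by_cases hvx : v = x
    · subst hvx
      have hsub : ((SimpleGraph.Walk.cons h p').edges.toFinset ∩ G.incidenceFinset v)
          ⊆ insert s(u, v) (p'.edges.toFinset ∩ G.incidenceFinset v) := by
        intro e he
        simp only [Finset.mem_inter, List.mem_toFinset, SimpleGraph.Walk.edges_cons,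
          List.mem_cons, Finset.mem_insert] at he ⊢
        tauto
      calc _ ≤ _ := Finset.card_le_card hsub
        _ ≤ (p'.edges.toFinset ∩ G.incidenceFinset v).card + 1 :=
            Finset.card_insert_le _ _
        _ ≤ 1 + 1 := by
            have := inc_card_start p' hp.of_cons
            omega
        _ = 2 := rfl
    · have hsub : ((SimpleGraph.Walk.cons h p').edges.toFinset ∩ G.incidenceFinset v)
          ⊆ p'.edges.toFinset ∩ G.incidenceFinset v := by
        intro e he
        simp only [Finset.mem_inter, List.mem_toFinset, SimpleGraph.Walk.edges_cons,
          List.mem_cons, mem_incF] at he ⊢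
        obtain ⟨he1 | he1, he2, hve⟩ := he
        · subst he1
          rw [Sym2.mem_iff] at hve
          exact absurd hve (by tauto)
        · exact ⟨he1, he2, hve⟩
      exact le_trans (Finset.card_le_card hsub) (ih hp.of_cons)

end Aux

/-- Hamiltonian path reduction: channels are the edges of G, SUs are the vertices,
the spectrum map of v is the set of edges incident to v, every budget is 2, and
the potential graph is complete. Then G has a Hamiltonian path iff the network is
connectable. -/
theorem stmt_6 {V : Type} [Fintype V] [DecidableEq V]
    (G : SimpleGraph V) [DecidableRel G.Adj] (h2 : 2 ≤ Fintype.card V) :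
    (∃ (u w : V) (p : G.Walk u w), p.IsHamiltonian) ↔
      (CRN.mk (fun v => G.incidenceFinset v) ⊤ (fun _ => 2) :
        CRN V (Sym2 V)).Connectable := by
  set I : CRN V (Sym2 V) := CRN.mk (fun v => G.incidenceFinset v) ⊤ (fun _ => 2) with hI
  have hnonempty : Nonempty V := Fintype.card_pos_iff.mp (by omega)
  constructor
  · rintro ⟨u, w, p, hp⟩
    set SA : V → Finset (Sym2 V) := fun v => p.edges.toFinset ∩ G.incidenceFinset v with hSA
    refine ⟨SA, fun v => ⟨Finset.inter_subset_right, inc_card_two p hp.isPath v⟩, ?_⟩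
    have hE : ∀ e ∈ p.edges, e ∈ (I.RG SA).edgeSet := by
      intro e he
      induction e with
      | h a b =>
        have hadj : G.Adj a b := p.adj_of_mem_edges he
        rw [SimpleGraph.mem_edgeSet]
        refine ⟨by simpa [hI, SimpleGraph.top_adj] using hadj.ne, ⟨s(a, b), ?_⟩⟩
        simp only [hSA, Finset.mem_inter, List.mem_toFinset, mem_incF]
        exact ⟨⟨he, hadj, by simp⟩, he, hadj, by simp⟩
    set q : (I.RG SA).Walk u w := p.transfer (I.RG SA) hE with hq
    have hqs : ∀ x : V, x ∈ q.support := by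
      intro x
      rw [hq, SimpleGraph.Walk.support_transfer]
      exact hp.mem_support x
    rw [SimpleGraph.connected_iff]
    refine ⟨fun x y => ?_, hnonempty⟩
    exact ((q.takeUntil x (hqs x)).reverse.append (q.takeUntil y (hqs y))).reachable
  · rintro ⟨SA, hSA, hconn⟩
    have hkey : ∀ {x y : V}, (I.RG SA).Adj x y → s(x, y) ∈ SA x ∧ s(x, y) ∈ SA y ∧ G.Adj x y := by
      intro x y hxy
      obtain ⟨htop, s, hs⟩ := hxy
      rw [Finset.mem_inter] at hs
      have hxne : x ≠ y := by simpa [hI, SimpleGraph.top_adj] using htop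
      have hx := mem_incF.mp ((hSA x).1 hs.1)
      have hy := mem_incF.mp ((hSA y).1 hs.2)
      have hsxy : s = s(x, y) := (Sym2.mem_and_mem_iff hxne).mp ⟨hx.2, hy.2⟩
      subst hsxy
      exact ⟨hs.1, hs.2, (G.mem_edgeSet).mp hx.1⟩
    have hdeg : ∀ v a c d, a ≠ c → a ≠ d → c ≠ d → (I.RG SA).Adj v a → (I.RG SA).Adj v c →
        (I.RG SA).Adj v d → False := by
      intro v a c d hac had hcd hva hvc hvd
      have ha := (hkey hva).1
      have hc := (hkey hvc).1
      have hd := (hkey hvd).1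
      have hsub : ({s(v, a), s(v, c), s(v, d)} : Finset (Sym2 V)) ⊆ SA v := by
        intro e he
        simp only [Finset.mem_insert, Finset.mem_singleton] at he
        rcases he with rfl | rfl | rfl <;> assumption
      have hcard : ({s(v, a), s(v, c), s(v, d)} : Finset (Sym2 V)).card = 3 := by
        rw [Finset.card_insert_of_notMem (by
            simp only [Finset.mem_insert, Finset.mem_singleton, Sym2.congr_right]
            tauto),
          Finset.card_insert_of_notMem (by
            simp only [Finset.mem_singleton, Sym2.congr_right]
            exact hcd)]
        rfl
      have := Finset.card_le_card hsub
      have h2v := (hSA v).2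
      simp only [hI] at h2v
      omega
    obtain ⟨v₀⟩ := hnonempty
    obtain ⟨u, w, q, hq⟩ := grow hdeg hconn
      (Finset.univ.filter (fun x => x ∉ (SimpleGraph.Walk.nil : (I.RG SA).Walk v₀ v₀).support)).card
      SimpleGraph.Walk.nil (SimpleGraph.Walk.IsPath.nil) le_rfl
    have hE : ∀ e ∈ q.edges, e ∈ G.edgeSet := by
      intro e he
      induction e with
      | h a b =>
        rw [SimpleGraph.mem_edgeSet]
        exact (hkey (q.adj_of_mem_edges he)).2.2
    refine ⟨u, w, q.transfer G hE, fun x => ?_⟩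
    rw [SimpleGraph.Walk.support_transfer]
    exact hq x
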